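/- Fix an integer k ≥ 1 and let p = 1/2. For every integer v ≥ k, P(V(k) = v) = f_{v-k+1}·(1/2)^v, where (f_i) is the Fibonacci sequence of order k. -/

import Mathlib

open MeasureTheory Finset

/-- Waiting time for the first success run of length `k`: the smallest `n ≥ k` such that
trials `n - k + 1, …, n` are all successes (trials are indexed from `1`). -/
noncomputable def waitingTime (k : ℕ) (ω : ℕ → Bool) : ℕ :=
  sInf {n | k ≤ n ∧ ∀ i ∈ Finset.Icc (n - k + 1) n, ω i = true}


def MsetP (k m : ℕ) (s : Finset ℕ) : Prop :=
  ∀ n ∈ Finset.Icc k m, ∃ i ∈ Finset.Icc (n - k + 1) n, i ∉ s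

instance {k m : ℕ} : DecidablePred (MsetP k m) := fun s => by
  unfold MsetP; infer_instance

def NsetP (k v : ℕ) (s : Finset ℕ) : Prop :=
  Finset.Icc (v - k + 1) v ⊆ s ∧
    ∀ n ∈ Finset.Icc k (v - 1), ∃ i ∈ Finset.Icc (n - k + 1) n, i ∉ s

instance {k v : ℕ} : DecidablePred (NsetP k v) := fun s => by
  unfold NsetP; infer_instance

def Mset (k m : ℕ) : Finset (Finset ℕ) :=
  (Finset.Icc 1 m).powerset.filter (MsetP k m)

def Nset (k v : ℕ) : Finset (Finset ℕ) :=
  (Finset.Icc 1 v).powerset.filter (NsetP k v)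

lemma mem_Mset {k m : ℕ} {s : Finset ℕ} :
    s ∈ Mset k m ↔ (∀ x ∈ s, 1 ≤ x ∧ x ≤ m) ∧
      ∀ n, k ≤ n → n ≤ m → ∃ i, (n - k + 1 ≤ i ∧ i ≤ n) ∧ i ∉ s := by
  simp only [Mset, MsetP, Finset.mem_filter, Finset.mem_powerset, Finset.subset_iff,
    Finset.mem_Icc]
  tauto

lemma mem_Nset {k v : ℕ} {s : Finset ℕ} :
    s ∈ Nset k v ↔ (∀ x ∈ s, 1 ≤ x ∧ x ≤ v) ∧
      (∀ x, v - k + 1 ≤ x → x ≤ v → x ∈ s) ∧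
      ∀ n, k ≤ n → n ≤ v - 1 → ∃ i, (n - k + 1 ≤ i ∧ i ≤ n) ∧ i ∉ s := by
  simp only [Nset, NsetP, Finset.mem_filter, Finset.mem_powerset, Finset.subset_iff,
    Finset.mem_Icc]
  tauto

lemma Mset_card_small {k m : ℕ} (h : m < k) : (Mset k m).card = 2 ^ m := by
  rw [Mset, Finset.filter_true_of_mem, Finset.card_powerset, Nat.card_Icc]
  · norm_num
  · intro s _
    unfold MsetP
    intro n hn
    rw [Finset.mem_Icc] at hn
    omega

lemma sup_compl_mem {m : ℕ} {s : Finset ℕ} (h : (Finset.Icc 1 m \ s).Nonempty) :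
    (Finset.Icc 1 m \ s).sup id ∈ Finset.Icc 1 m \ s := by
  rw [← Finset.sup'_eq_sup h, ← Finset.max'_eq_sup']
  exact Finset.max'_mem _ h

lemma sup_compl_spec {m : ℕ} {s : Finset ℕ} (h : (Finset.Icc 1 m \ s).Nonempty) :
    (Finset.Icc 1 m \ s).sup id ∉ s ∧ 1 ≤ (Finset.Icc 1 m \ s).sup id ∧
      (Finset.Icc 1 m \ s).sup id ≤ m ∧
      ∀ x, (Finset.Icc 1 m \ s).sup id < x → x ≤ m → x ∈ s := by
  have hmem := sup_compl_mem h
  rw [Finset.mem_sdiff, Finset.mem_Icc] at hmem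
  refine ⟨hmem.2, hmem.1.1, hmem.1.2, ?_⟩
  intro x hx hxm
  by_contra hxs
  have : x ≤ (Finset.Icc 1 m \ s).sup id := Finset.le_sup (f := id) (by
    rw [Finset.mem_sdiff, Finset.mem_Icc]; exact ⟨⟨by omega, hxm⟩, hxs⟩)
  omega

lemma sup_compl_eq {m p : ℕ} {s : Finset ℕ} (hp1 : 1 ≤ p) (hpm : p ≤ m)
    (hps : p ∉ s) (habove : ∀ x, p < x → x ≤ m → x ∈ s) :
    (Finset.Icc 1 m \ s).sup id = p := by
  have hpC : p ∈ Finset.Icc 1 m \ s := by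
    rw [Finset.mem_sdiff, Finset.mem_Icc]; exact ⟨⟨hp1, hpm⟩, hps⟩
  apply le_antisymm
  · apply Finset.sup_le
    intro x hx
    rw [Finset.mem_sdiff, Finset.mem_Icc] at hx
    simp only [id_eq]
    by_contra hxp
    exact hx.2 (habove x (by omega) hx.1.2)
  · exact Finset.le_sup (f := id) hpC

lemma Mset_card_rec {k m : ℕ} (hk : 1 ≤ k) (hm : k ≤ m) :
    (Mset k m).card = ∑ j ∈ Finset.Icc 1 k, (Mset k (m - j)).card := by
  classical
  have hwit : ∀ s ∈ Mset k m, ∃ i, (m - k + 1 ≤ i ∧ i ≤ m) ∧ i ∈ Finset.Icc 1 m \ s := by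
    intro s hs
    rw [mem_Mset] at hs
    obtain ⟨i, ⟨hi1, hi2⟩, hi3⟩ := hs.2 m hm le_rfl
    exact ⟨i, ⟨hi1, hi2⟩, by rw [Finset.mem_sdiff, Finset.mem_Icc]; exact ⟨⟨by omega, hi2⟩, hi3⟩⟩
  have hne : ∀ s ∈ Mset k m, (Finset.Icc 1 m \ s).Nonempty := by
    intro s hs
    obtain ⟨i, _, hi⟩ := hwit s hs
    exact ⟨i, hi⟩
  have hsup_ge : ∀ s ∈ Mset k m, m - k + 1 ≤ (Finset.Icc 1 m \ s).sup id := by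
    intro s hs
    obtain ⟨i, hi1, hi⟩ := hwit s hs
    exact le_trans hi1.1 (Finset.le_sup (f := id) hi)
  have hfib : ∀ s ∈ Mset k m, m + 1 - (Finset.Icc 1 m \ s).sup id ∈ Finset.Icc 1 k := by
    intro s hs
    obtain ⟨-, h1a, h1b, -⟩ := sup_compl_spec (hne s hs)
    have h2 := hsup_ge s hs
    rw [Finset.mem_Icc]
    omega
  rw [Finset.card_eq_sum_card_fiberwise
    (f := fun s => m + 1 - (Finset.Icc 1 m \ s).sup id) (t := Finset.Icc 1 k) hfib]
  apply Finset.sum_congr rfl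
  intro d hd
  rw [Finset.mem_Icc] at hd
  apply Finset.card_nbij' (i := fun s => s.filter (· ≤ m - d))
    (j := fun t => t ∪ Finset.Icc (m - d + 2) m)
  · -- forward maps into Mset k (m - d)
    intro s hs
    simp only [Finset.mem_coe] at hs ⊢
    rw [Finset.mem_filter] at hs
    obtain ⟨hsM, hsd⟩ := hs
    rw [mem_Mset] at hsM ⊢
    constructor
    · intro x hx
      rw [Finset.mem_filter] at hx
      have h5 := hsM.1 x hx.1
      have h6 : x ≤ m - d := by simpa using hx.2
      omega
    · intro n hn1 hn2
      obtain ⟨i, hi, hi3⟩ := hsM.2 n hn1 (by omega)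
      refine ⟨i, hi, ?_⟩
      rw [Finset.mem_filter]
      tauto
  · -- backward maps into fiber
    intro t ht
    simp only [Finset.mem_coe] at ht ⊢
    have htM := ht
    rw [mem_Mset] at htM
    rw [Finset.mem_filter]
    have hps : m - d + 1 ∉ t ∪ Finset.Icc (m - d + 2) m := by
      rw [Finset.mem_union, Finset.mem_Icc]
      push_neg
      refine ⟨fun hc => ?_, fun h => by omega⟩
      have := htM.1 _ hc
      omega
    have habove : ∀ x, m - d + 1 < x → x ≤ m → x ∈ t ∪ Finset.Icc (m - d + 2) m := by
      intro x hx1 hx2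
      rw [Finset.mem_union, Finset.mem_Icc]
      right; omega
    constructor
    · rw [mem_Mset]
      constructor
      · intro x hx
        rw [Finset.mem_union, Finset.mem_Icc] at hx
        rcases hx with hx | hx
        · have := htM.1 x hx; omega
        · omega
      · intro n hn1 hn2
        by_cases hcase : n ≤ m - d
        · obtain ⟨i, hi, hi3⟩ := htM.2 n hn1 hcase
          refine ⟨i, hi, ?_⟩
          rw [Finset.mem_union, Finset.mem_Icc]
          push_neg
          exact ⟨hi3, fun h => by omega⟩
        · exact ⟨m - d + 1, by omega, hps⟩
    · rw [sup_compl_eq (by omega) (by omega) hps habove]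
      omega
  · -- left inverse
    intro s hs
    simp only [Finset.mem_coe] at hs ⊢
    rw [Finset.mem_filter] at hs
    obtain ⟨hsM, hsd⟩ := hs
    have hspec := sup_compl_spec (hne s hsM)
    have hsupeq : (Finset.Icc 1 m \ s).sup id = m - d + 1 := by omega
    rw [hsupeq] at hspec
    have hsub := (mem_Mset.mp hsM).1
    ext x
    simp only [Finset.mem_union, Finset.mem_filter, Finset.mem_Icc, decide_eq_true_eq]
    constructor
    · rintro (⟨hx, _⟩ | hx)
      · exact hx
      · exact hspec.2.2.2 x (by omega) (by omega)
    · intro hx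
      have hxm := hsub x hx
      by_cases hc : x ≤ m - d
      · exact Or.inl ⟨hx, hc⟩
      · right
        have : x ≠ m - d + 1 := fun h => hspec.1 (h ▸ hx)
        omega
  · -- right inverse
    intro t ht
    simp only [Finset.mem_coe] at ht ⊢
    have htM := (mem_Mset.mp ht).1
    ext x
    simp only [Finset.mem_filter, Finset.mem_union, Finset.mem_Icc, decide_eq_true_eq]
    constructor
    · rintro ⟨hx | hx, hxd⟩
      · exact hx
      · omega
    · intro hx
      have := htM x hx
      exact ⟨Or.inl hx, by omega⟩

lemma Nset_card_k {k : ℕ} (hk : 1 ≤ k) : (Nset k k).card = 1 := by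
  have heq : Nset k k = {Finset.Icc 1 k} := by
    ext s
    rw [mem_Nset, Finset.mem_singleton]
    constructor
    · rintro ⟨h1, h2, h3⟩
      ext x
      rw [Finset.mem_Icc]
      constructor
      · intro hx; exact h1 x hx
      · intro hx; exact h2 x (by omega) (by omega)
    · rintro rfl
      refine ⟨fun x hx => by rw [Finset.mem_Icc] at hx; exact hx,
        fun x hx1 hx2 => by rw [Finset.mem_Icc]; omega,
        fun n hn1 hn2 => by omega⟩
  rw [heq, Finset.card_singleton]

lemma Nset_card_gt {k v : ℕ} (hk : 1 ≤ k) (hv : k < v) :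
    (Nset k v).card = (Mset k (v - k - 1)).card := by
  classical
  apply Finset.card_nbij' (i := fun s => s.filter (· ≤ v - k - 1))
    (j := fun t => t ∪ Finset.Icc (v - k + 1) v)
  · intro s hs
    simp only [Finset.mem_coe] at hs ⊢
    rw [mem_Nset] at hs
    obtain ⟨h1, h2, h3⟩ := hs
    rw [mem_Mset]
    constructor
    · intro x hx
      rw [Finset.mem_filter] at hx
      have h5 := h1 x hx.1
      have h6 : x ≤ v - k - 1 := by simpa using hx.2
      omega
    · intro n hn1 hn2
      obtain ⟨i, hi, hi3⟩ := h3 n hn1 (by omega)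
      refine ⟨i, hi, ?_⟩
      rw [Finset.mem_filter]
      tauto
  · intro t ht
    simp only [Finset.mem_coe] at ht ⊢
    rw [mem_Mset] at ht
    obtain ⟨h1, h2⟩ := ht
    rw [mem_Nset]
    refine ⟨?_, ?_, ?_⟩
    · intro x hx
      rw [Finset.mem_union, Finset.mem_Icc] at hx
      rcases hx with hx | hx
      · have := h1 x hx; omega
      · omega
    · intro x hx1 hx2
      rw [Finset.mem_union, Finset.mem_Icc]
      right; omega
    · intro n hn1 hn2
      by_cases hcase : n ≤ v - k - 1
      · obtain ⟨i, hi, hi3⟩ := h2 n hn1 hcase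
        refine ⟨i, hi, ?_⟩
        rw [Finset.mem_union, Finset.mem_Icc]
        push_neg
        exact ⟨hi3, fun h => by omega⟩
      · refine ⟨v - k, by omega, ?_⟩
        rw [Finset.mem_union, Finset.mem_Icc]
        push_neg
        refine ⟨fun hc => ?_, fun h => by omega⟩
        have := h1 _ hc
        omega
  · intro s hs
    simp only [Finset.mem_coe] at hs ⊢
    rw [mem_Nset] at hs
    obtain ⟨h1, h2, h3⟩ := hs
    have hvk : v - k ∉ s := by
      obtain ⟨i, ⟨hi1, hi2⟩, hi3⟩ := h3 (v - 1) (by omega) le_rfl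
      have : i = v - k := by
        by_contra hne
        exact hi3 (h2 i (by omega) (by omega))
      exact this ▸ hi3
    ext x
    simp only [Finset.mem_union, Finset.mem_filter, Finset.mem_Icc, decide_eq_true_eq]
    constructor
    · rintro (⟨hx, _⟩ | hx)
      · exact hx
      · exact h2 x hx.1 hx.2
    · intro hx
      have hxv := h1 x hx
      by_cases hc : x ≤ v - k - 1
      · exact Or.inl ⟨hx, hc⟩
      · right
        have : x ≠ v - k := fun h => hvk (h ▸ hx)
        omega
  · intro t ht
    simp only [Finset.mem_coe] at ht ⊢
    rw [mem_Mset] at ht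
    ext x
    simp only [Finset.mem_filter, Finset.mem_union, Finset.mem_Icc, decide_eq_true_eq]
    constructor
    · rintro ⟨hx | hx, hxd⟩
      · exact hx
      · omega
    · intro hx
      have := ht.1 x hx
      exact ⟨Or.inl hx, by omega⟩

lemma geom_sum_aux : ∀ m : ℕ, ∑ j ∈ Finset.Ioc 0 m, (2:ℝ) ^ (m - j) = 2 ^ m - 1 := by
  intro m
  induction m with
  | zero => simp
  | succ m ih =>
    rw [Finset.sum_Ioc_succ_top (by omega)]
    have hc : ∀ j ∈ Finset.Ioc 0 m, (2:ℝ) ^ (m + 1 - j) = 2 * 2 ^ (m - j) := by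
      intro j hj
      rw [Finset.mem_Ioc] at hj
      rw [show m + 1 - j = (m - j) + 1 by omega, pow_succ]
      ring
    rw [Finset.sum_congr rfl hc, ← Finset.mul_sum, ih, Nat.sub_self, pow_zero, pow_succ]
    ring

lemma M_eq_f {k : ℕ} (hk : 1 ≤ k) (f : ℤ → ℝ) (hf0 : ∀ i : ℤ, i < 1 → f i = 0)
    (hf1 : f 1 = 1)
    (hfrec : ∀ i : ℤ, 2 ≤ i → f i = ∑ j ∈ Finset.Icc 1 k, f (i - j)) :
    ∀ m : ℕ, ((Mset k m).card : ℝ) = f ((m : ℤ) + 2) := by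
  intro m
  induction m using Nat.strong_induction_on with
  | _ m ih =>
    by_cases hcase : k ≤ m
    · rw [Mset_card_rec hk hcase, hfrec _ (by omega), Nat.cast_sum]
      apply Finset.sum_congr rfl
      intro j hj
      rw [Finset.mem_Icc] at hj
      have hlt : m - j < m := by omega
      have he : (m:ℤ) + 2 - j = ((m - j : ℕ) : ℤ) + 2 := by omega
      rw [he, ← ih _ hlt]
    · have hsplit : Finset.Icc 1 k = Finset.Ioc 0 k := Finset.Icc_add_one_left_eq_Ioc 0 k
      rw [Mset_card_small (by omega), hfrec ((m:ℤ)+2) (by omega), hsplit]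
      rw [← Finset.sum_Ioc_consecutive _ (Nat.zero_le m) (by omega : m ≤ k)]
      rw [← Finset.sum_Ioc_consecutive _ (by omega : m ≤ m + 1) (by omega : m + 1 ≤ k)]
      have h1 : ∑ j ∈ Finset.Ioc 0 m, f ((m:ℤ) + 2 - j) = 2 ^ m - 1 := by
        rw [← geom_sum_aux m]
        apply Finset.sum_congr rfl
        intro j hj
        rw [Finset.mem_Ioc] at hj
        have hlt : m - j < m := by omega
        have he : (m:ℤ) + 2 - j = ((m - j : ℕ) : ℤ) + 2 := by omega
        rw [he, ← ih _ hlt, Mset_card_small (by omega)]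
        push_cast
        ring
      have h2 : ∑ j ∈ Finset.Ioc m (m + 1), f ((m:ℤ) + 2 - j) = 1 := by
        rw [← Finset.Icc_add_one_left_eq_Ioc, Finset.Icc_self, Finset.sum_singleton]
        rw [show (m:ℤ) + 2 - ((m + 1 : ℕ) : ℤ) = 1 by push_cast; ring]
        exact hf1
      have h3 : ∑ j ∈ Finset.Ioc (m + 1) k, f ((m:ℤ) + 2 - j) = 0 := by
        apply Finset.sum_eq_zero
        intro j hj
        rw [Finset.mem_Ioc] at hj
        exact hf0 _ (by omega)
      rw [h1, h2, h3]
      push_cast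
      ring

lemma Nset_eq_f {k : ℕ} (hk : 1 ≤ k) (f : ℤ → ℝ) (hf0 : ∀ i : ℤ, i < 1 → f i = 0)
    (hf1 : f 1 = 1)
    (hfrec : ∀ i : ℤ, 2 ≤ i → f i = ∑ j ∈ Finset.Icc 1 k, f (i - j))
    {v : ℕ} (hv : k ≤ v) :
    ((Nset k v).card : ℝ) = f ((v:ℤ) - k + 1) := by
  rcases eq_or_lt_of_le hv with rfl | hlt
  · rw [Nset_card_k hk, show (k:ℤ) - k + 1 = 1 by ring, hf1]
    norm_num
  · rw [Nset_card_gt hk hlt, M_eq_f hk f hf0 hf1 hfrec]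
    congr 1
    omega


theorem stmt2 (p : ℝ) (hp0 : 0 < p) (hp1 : p < 1) (hp : p = 1 / 2)
    (k : ℕ) (hk : 1 ≤ k)
    (μ : Measure (ℕ → Bool)) [IsProbabilityMeasure μ]
    (hμ : ∀ (n : ℕ) (b : ℕ → Bool),
      μ {ω | ∀ i, 1 ≤ i → i ≤ n → ω i = b i}
        = ENNReal.ofReal (∏ i ∈ Finset.Icc 1 n, if b i = true then p else 1 - p))
    -- `f` is the Fibonacci sequence of order `k`
    (f : ℤ → ℝ) (hf0 : ∀ i : ℤ, i < 1 → f i = 0) (hf1 : f 1 = 1)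
    (hfrec : ∀ i : ℤ, 2 ≤ i → f i = ∑ j ∈ Finset.Icc 1 k, f (i - j)) :
    ∀ v : ℕ, k ≤ v →
      (μ {ω | waitingTime k ω = v}).toReal = f ((v : ℤ) - k + 1) * (1 / 2) ^ v := by
  subst hp
  intro v hv
  classical
  have hv1 : 1 ≤ v := le_trans hk hv
  -- Step 1: the event is a finite disjoint union of cylinders indexed by `Nset k v`.
  have hset : {ω : ℕ → Bool | waitingTime k ω = v} =
      ⋃ s ∈ Nset k v, {ω : ℕ → Bool | ∀ i, 1 ≤ i → i ≤ v → ω i = decide (i ∈ s)} := by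
    ext ω
    simp only [Set.mem_setOf_eq, Set.mem_iUnion, exists_prop]
    constructor
    · intro hw
      have hSne : Set.Nonempty {n | k ≤ n ∧ ∀ i ∈ Finset.Icc (n - k + 1) n, ω i = true} := by
        by_contra hemp
        rw [Set.not_nonempty_iff_eq_empty] at hemp
        rw [waitingTime, hemp, Nat.sInf_empty] at hw
        omega
      have hvS : k ≤ v ∧ ∀ i ∈ Finset.Icc (v - k + 1) v, ω i = true := by
        have := Nat.sInf_mem hSne
        rw [show sInf {n | k ≤ n ∧ ∀ i ∈ Finset.Icc (n - k + 1) n, ω i = true} = v from hw] at this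
        exact this
      have hmin : ∀ n, n < v →
          ¬ (k ≤ n ∧ ∀ i ∈ Finset.Icc (n - k + 1) n, ω i = true) := by
        intro n hn hnS
        have := Nat.sInf_le (s := {n | k ≤ n ∧ ∀ i ∈ Finset.Icc (n - k + 1) n, ω i = true}) hnS
        rw [show sInf {n | k ≤ n ∧ ∀ i ∈ Finset.Icc (n - k + 1) n, ω i = true} = v from hw] at this
        omega
      refine ⟨(Finset.Icc 1 v).filter (fun i => ω i = true), ?_, ?_⟩
      · rw [mem_Nset]
        refine ⟨?_, ?_, ?_⟩
        · intro x hx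
          rw [Finset.mem_filter, Finset.mem_Icc] at hx
          exact hx.1
        · intro x hx1 hx2
          rw [Finset.mem_filter, Finset.mem_Icc]
          exact ⟨⟨by omega, hx2⟩, hvS.2 x (Finset.mem_Icc.mpr ⟨hx1, hx2⟩)⟩
        · intro n hn1 hn2
          have hns := hmin n (by omega)
          push_neg at hns
          obtain ⟨i, hi, hi3⟩ := hns hn1
          rw [Finset.mem_Icc] at hi
          refine ⟨i, hi, ?_⟩
          rw [Finset.mem_filter]
          tauto
      · intro i hi1 hi2
        by_cases hωi : ω i = true
        · simp [Finset.mem_filter, Finset.mem_Icc, hi1, hi2, hωi]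
        · simp only [Bool.not_eq_true] at hωi
          simp [Finset.mem_filter, hωi]
    · rintro ⟨s, hsN, hωs⟩
      rw [mem_Nset] at hsN
      obtain ⟨h1, h2, h3⟩ := hsN
      have hvS : v ∈ {n | k ≤ n ∧ ∀ i ∈ Finset.Icc (n - k + 1) n, ω i = true} := by
        refine ⟨hv, fun i hi => ?_⟩
        rw [Finset.mem_Icc] at hi
        rw [hωs i (by omega) hi.2]
        simp only [decide_eq_true_eq]
        exact h2 i hi.1 hi.2
      have hmin : ∀ n ∈ {n | k ≤ n ∧ ∀ i ∈ Finset.Icc (n - k + 1) n, ω i = true},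
          v ≤ n := by
        intro n hn
        by_contra hlt
        push_neg at hlt
        obtain ⟨hn1, hn2⟩ := hn
        obtain ⟨i, ⟨hi1, hi2⟩, hi3⟩ := h3 n hn1 (by omega)
        have hωi := hn2 i (Finset.mem_Icc.mpr ⟨hi1, hi2⟩)
        rw [hωs i (by omega) (by omega)] at hωi
        simp only [decide_eq_true_eq] at hωi
        exact hi3 hωi
      rw [waitingTime]
      exact le_antisymm (Nat.sInf_le hvS) (le_csInf ⟨v, hvS⟩ hmin)
  -- Step 2: cylinders are measurable.
  have hmeas : ∀ s : Finset ℕ,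
      MeasurableSet {ω : ℕ → Bool | ∀ i, 1 ≤ i → i ≤ v → ω i = decide (i ∈ s)} := by
    intro s
    have he : {ω : ℕ → Bool | ∀ i, 1 ≤ i → i ≤ v → ω i = decide (i ∈ s)}
        = ⋂ i, ⋂ (_ : 1 ≤ i), ⋂ (_ : i ≤ v),
            (fun ω : ℕ → Bool => ω i) ⁻¹' {decide (i ∈ s)} := by
      ext ω
      simp [Set.mem_iInter]
    rw [he]
    exact MeasurableSet.iInter fun i => MeasurableSet.iInter fun _ =>
      MeasurableSet.iInter fun _ =>
        measurable_pi_apply i (measurableSet_singleton _)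
  -- Step 3: cylinders are pairwise disjoint.
  have hdisj : (↑(Nset k v) : Set (Finset ℕ)).PairwiseDisjoint
      (fun s => {ω : ℕ → Bool | ∀ i, 1 ≤ i → i ≤ v → ω i = decide (i ∈ s)}) := by
    intro s hs t ht hst
    simp only [Function.onFun]
    rw [Set.disjoint_left]
    intro ω hω1 hω2
    apply hst
    have hs' := (mem_Nset.mp (Finset.mem_coe.mp hs)).1
    have ht' := (mem_Nset.mp (Finset.mem_coe.mp ht)).1
    ext x
    by_cases hx : 1 ≤ x ∧ x ≤ v
    · have e1 := hω1 x hx.1 hx.2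
      have e2 := hω2 x hx.1 hx.2
      rw [e1] at e2
      rw [decide_eq_decide] at e2
      exact e2
    · constructor
      · intro h; have := hs' x h; omega
      · intro h; have := ht' x h; omega
  -- Step 4: compute the measure.
  rw [hset, measure_biUnion_finset hdisj (fun s _ => hmeas s)]
  have hCmeas : ∀ s ∈ Nset k v,
      μ {ω : ℕ → Bool | ∀ i, 1 ≤ i → i ≤ v → ω i = decide (i ∈ s)}
        = ENNReal.ofReal ((1/2 : ℝ) ^ v) := by
    intro s _
    rw [hμ v (fun i => decide (i ∈ s))]
    congr 1
    rw [Finset.prod_congr rfl (g := fun _ => (1:ℝ)/2) (fun i _ => by split <;> norm_num)]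
    rw [Finset.prod_const, Nat.card_Icc]
    norm_num
  rw [Finset.sum_congr rfl hCmeas, Finset.sum_const, nsmul_eq_mul, ENNReal.toReal_mul,
    ENNReal.toReal_natCast, ENNReal.toReal_ofReal (by positivity)]
  rw [Nset_eq_f hk f hf0 hf1 hfrec hv]
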